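/- arXiv:1710.05342 — 3 statements merged into one kernel-verified Lean document; each statement's English description precedes it below -/
import Mathlib

section
/- Let J = [0,α) ∪ [α+r, L+r) with 0 < α < L and r > 0. The exponential system E(ℤ) = {e^{2πi nx}}_{n∈ℤ} is a frame for L²(J) if and only if L + {r} ≤ 1, where {r} is the fractional part of r. -/
open MeasureTheory Real Set
open scoped ENNReal

noncomputable section

/-- The exponential `e^{2πi n x}` on `ℝ`. -/
def fExp1 (n : ℤ) (x : ℝ) : ℂ :=
  Complex.exp (2 * Real.pi * Complex.I * (n : ℝ) * x)

lemma fExp1_conj (n : ℤ) (x : ℝ) :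
    (starRingEnd ℂ) (fExp1 n x) = Complex.exp (-(2 * Real.pi * Complex.I * (n : ℝ) * x)) := by
  rw [fExp1, ← Complex.exp_conj]
  congr 1
  simp only [map_mul, Complex.conj_ofReal, Complex.conj_I, map_ofNat]
  push_cast
  ring

lemma fExp1_conj_add_int (n k : ℤ) (x : ℝ) :
    (starRingEnd ℂ) (fExp1 n (x + (k : ℝ))) = (starRingEnd ℂ) (fExp1 n x) := by
  rw [fExp1_conj, fExp1_conj]
  have h : -(2 * (Real.pi:ℂ) * Complex.I * ((n : ℝ) : ℂ) * (((x + (k:ℝ)) : ℝ) : ℂ)) =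
      -(2 * (Real.pi:ℂ) * Complex.I * ((n : ℝ) : ℂ) * ((x:ℝ) : ℂ))
        + (-(n*k) : ℤ) * (2 * Real.pi * Complex.I) := by
    push_cast; ring
  rw [h, Complex.exp_add, Complex.exp_int_mul_two_pi_mul_I, mul_one]

lemma fExp1_norm_conj (n : ℤ) (x : ℝ) : ‖(starRingEnd ℂ) (fExp1 n x)‖ = 1 := by
  rw [fExp1_conj]
  have : -(2 * (Real.pi:ℂ) * Complex.I * (n : ℝ) * x) = (↑(-(2 * Real.pi * n * x)) : ℝ) * Complex.I := by
    push_cast; ring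
  rw [this, Complex.norm_exp_ofReal_mul_I]

lemma fExp1_conj_continuous (n : ℤ) : Continuous fun x : ℝ => (starRingEnd ℂ) (fExp1 n x) := by
  simp only [fExp1_conj]
  fun_prop

lemma setIntegral_Ico_eq_intervalIntegral {E : Type*} [NormedAddCommGroup E] [NormedSpace ℝ E]
    {a b : ℝ} (h : a ≤ b) (g : ℝ → E) : ∫ x in Ico a b, g x = ∫ x in a..b, g x := by
  rw [intervalIntegral.integral_of_le h, Measure.restrict_congr_set Ico_ae_eq_Ioc]

instance fact_zero_lt_one_real : Fact ((0:ℝ) < 1) := ⟨one_pos⟩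

lemma haar_eq_volume : (AddCircle.haarAddCircle : Measure (AddCircle (1:ℝ))) = volume := by
  have h := AddCircle.volume_eq_smul_haarAddCircle (T := (1:ℝ))
  rw [h]
  simp

lemma parseval01 (F : ℝ → ℂ) (hF : MemLp F 2 (volume.restrict (Ico (0:ℝ) 1))) :
    ∑' n : ℤ, ‖∫ x in Ico (0:ℝ) 1, F x * (starRingEnd ℂ) (fExp1 n x)‖ ^ 2
      = ∫ x in Ico (0:ℝ) 1, ‖F x‖ ^ 2 := by
  obtain ⟨F', hF'meas, hFF'⟩ := hF.aestronglyMeasurable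
  have hres : volume.restrict (Ico (0:ℝ) 1) = volume.restrict (Ioc (0:ℝ) 1) :=
    Measure.restrict_congr_set Ico_ae_eq_Ioc
  rw [hres] at hFF'
  set G : AddCircle (1:ℝ) → ℂ := AddCircle.liftIoc (1:ℝ) 0 F' with hG
  have hGmeas : StronglyMeasurable G := by
    have : G = (fun y : Ioc (0:ℝ) (0+1) => F' y) ∘ (AddCircle.measurableEquivIoc (1:ℝ) 0) := rfl
    rw [this]
    exact (hF'meas.comp_measurable measurable_subtype_coe).comp_measurable
      (AddCircle.measurableEquivIoc (1:ℝ) 0).measurable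
  have hGmk : ∀ x ∈ Ioc (0:ℝ) 1, G ((x : ℝ) : AddCircle (1:ℝ)) = F' x := by
    intro x hx
    exact AddCircle.liftIoc_coe_apply (by simpa using hx)
  have hmapeq : Measure.map ((↑) : ℝ → AddCircle (1:ℝ)) (volume.restrict (Ioc (0:ℝ) 1))
      = AddCircle.haarAddCircle := by
    have := (AddCircle.measurePreserving_mk (1:ℝ) 0).map_eq
    rw [zero_add] at this
    rw [this, haar_eq_volume]
  have hFG : F =ᵐ[volume.restrict (Ioc (0:ℝ) 1)] (fun x : ℝ => G x) := by
    filter_upwards [hFF', ae_restrict_mem measurableSet_Ioc] with x hx1 hx2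
    rw [hx1, hGmk x hx2]
  have hGm : MemLp G 2 AddCircle.haarAddCircle := by
    rw [← hmapeq]
    have hcomp : MemLp (G ∘ ((↑) : ℝ → AddCircle (1:ℝ))) 2 (volume.restrict (Ioc (0:ℝ) 1)) :=
      (hres ▸ hF).ae_eq hFG
    exact (memLp_map_measure_iff (g := G) (f := ((↑) : ℝ → AddCircle (1:ℝ)))
      hGmeas.aestronglyMeasurable AddCircle.measurable_mk'.aemeasurable).mpr hcomp
  have hpar := tsum_sq_fourierCoeff (hGm.toLp G)
  have hcoe : ∀ n : ℤ, fourierCoeff ((hGm.toLp G : Lp ℂ 2 AddCircle.haarAddCircle) : AddCircle (1:ℝ) → ℂ) n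
      = fourierCoeff G n := by
    intro n
    simp only [fourierCoeff]
    apply integral_congr_ae
    filter_upwards [hGm.coeFn_toLp] with t ht
    rw [ht]
  have hcoeff : ∀ n : ℤ, fourierCoeff G n
      = ∫ x in Ico (0:ℝ) 1, F x * (starRingEnd ℂ) (fExp1 n x) := by
    intro n
    rw [fourierCoeff_eq_intervalIntegral G n 0, zero_add,
      intervalIntegral.integral_of_le (by norm_num : (0:ℝ) ≤ 1), hres]
    rw [show (1/(1:ℝ)) = 1 by norm_num, one_smul]
    apply integral_congr_ae
    filter_upwards [hFF', ae_restrict_mem measurableSet_Ioc] with x hx1 hx2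
    rw [smul_eq_mul, hGmk x hx2, ← hx1, fourier_coe_apply, fExp1_conj]
    rw [mul_comm]
    congr 1
    congr 1
    push_cast
    ring
  have hrhs : (∫ t : AddCircle (1:ℝ), ‖(hGm.toLp G : Lp ℂ 2 AddCircle.haarAddCircle) t‖ ^ 2 ∂AddCircle.haarAddCircle)
      = ∫ x in Ico (0:ℝ) 1, ‖F x‖ ^ 2 := by
    have h1 : (∫ t : AddCircle (1:ℝ), ‖(hGm.toLp G : Lp ℂ 2 AddCircle.haarAddCircle) t‖ ^ 2 ∂AddCircle.haarAddCircle)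
        = ∫ t : AddCircle (1:ℝ), ‖G t‖ ^ 2 ∂AddCircle.haarAddCircle := by
      apply integral_congr_ae
      filter_upwards [hGm.coeFn_toLp] with t ht
      rw [ht]
    rw [h1, ← hmapeq, integral_map AddCircle.measurable_mk'.aemeasurable
      (hGmeas.norm.measurable.pow_const 2).aestronglyMeasurable, hres]
    apply integral_congr_ae
    filter_upwards [hFG] with x hx
    rw [← hx]
  calc ∑' n : ℤ, ‖∫ x in Ico (0:ℝ) 1, F x * (starRingEnd ℂ) (fExp1 n x)‖ ^ 2
      = ∑' n : ℤ, ‖fourierCoeff ((hGm.toLp G : Lp ℂ 2 AddCircle.haarAddCircle)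
          : AddCircle (1:ℝ) → ℂ) n‖ ^ 2 := by
        refine tsum_congr fun n => ?_
        rw [hcoe n, hcoeff n]
    _ = ∫ x in Ico (0:ℝ) 1, ‖F x‖ ^ 2 := by rw [hpar, hrhs]

lemma finite_restrict_Ico (a b : ℝ) : IsFiniteMeasure (volume.restrict (Ico a b)) := by
  constructor
  rw [Measure.restrict_apply_univ, Real.volume_Ico]
  exact ENNReal.ofReal_lt_top

lemma integrable_restrict_restrict {E : Type*} [NormedAddCommGroup E]
    {g : ℝ → E} {s t : Set ℝ} (hs : MeasurableSet s)
    (h : Integrable g (volume.restrict s)) :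
    Integrable g ((volume.restrict t).restrict s) :=
  h.mono_measure (by
    rw [Measure.restrict_restrict hs]
    exact Measure.restrict_mono inter_subset_left le_rfl)

set_option maxHeartbeats 1000000 in
lemma reverse_eq (α L r : ℝ) (hα : 0 < α) (hαL : α < L) (hr : 0 < r)
    (h1 : L + Int.fract r ≤ 1) (f : ℝ → ℂ)
    (hf : MemLp f 2 (volume.restrict (Ico 0 α ∪ Ico (α + r) (L + r)))) :
    ∑' n : ℤ, ‖∫ x in Ico 0 α ∪ Ico (α + r) (L + r), f x * (starRingEnd ℂ) (fExp1 n x)‖ ^ 2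
      = ∫ x in Ico 0 α ∪ Ico (α + r) (L + r), ‖f x‖ ^ 2 := by
  set ρ := Int.fract r with hρ
  have hρ0 : 0 ≤ ρ := Int.fract_nonneg r
  have hρ1 : ρ < 1 := Int.fract_lt_one r
  set m : ℤ := ⌊r⌋ with hm
  have hmr : (m : ℝ) = r - ρ := by rw [hρ, Int.fract]; ring
  set S1 : Set ℝ := Ico 0 α with hS1
  set S2 : Set ℝ := Ico (α + ρ) (L + ρ) with hS2
  set S2' : Set ℝ := Ico (α + r) (L + r) with hS2'
  haveI := finite_restrict_Ico 0 α
  haveI := finite_restrict_Ico (α + ρ) (L + ρ)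
  haveI := finite_restrict_Ico (α + r) (L + r)
  have hpre : (fun x => x + (m:ℝ)) ⁻¹' S2' = S2 := by
    rw [hS2', preimage_add_const_Ico,
      show α + r - (m:ℝ) = α + ρ by linarith, show L + r - (m:ℝ) = L + ρ by linarith]
  have hmp : MeasurePreserving (fun x => x + (m:ℝ)) (volume.restrict S2)
      (volume.restrict S2') := by
    have := (measurePreserving_add_right volume (m:ℝ)).restrict_preimage
      (s := S2') measurableSet_Ico
    rwa [hpre] at this
  have hf1 : MemLp f 2 (volume.restrict S1) :=
    hf.mono_measure (Measure.restrict_mono subset_union_left le_rfl)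
  have hf2' : MemLp f 2 (volume.restrict S2') :=
    hf.mono_measure (Measure.restrict_mono subset_union_right le_rfl)
  have hf2 : MemLp (fun x => f (x + (m:ℝ))) 2 (volume.restrict S2) :=
    hf2'.comp_measurePreserving hmp
  -- the folded function
  set F : ℝ → ℂ := fun x => S1.indicator f x
      + S2.indicator (fun y => f (y + (m:ℝ))) x with hF
  have hFm : MemLp F 2 (volume.restrict (Ico (0:ℝ) 1)) := by
    refine MemLp.mono_measure Measure.restrict_le_self ?_
    exact ((memLp_indicator_iff_restrict measurableSet_Ico).mpr hf1).add
      ((memLp_indicator_iff_restrict measurableSet_Ico).mpr hf2)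
  have hS1sub : S1 ⊆ Ico (0:ℝ) 1 := Ico_subset_Ico le_rfl (by linarith)
  have hS2sub : S2 ⊆ Ico (0:ℝ) 1 := Ico_subset_Ico (by linarith) (by linarith)
  have hdisjJ : Disjoint S1 S2' := by
    rw [Set.disjoint_left]
    intro x hx1 hx2
    exact absurd (hx2.1.trans_lt hx1.2).le (not_le.mpr (by linarith))
  -- generic splitting of the [0,1) integral
  have hsplit : ∀ (g : ℝ → ℂ), (∀ s : Set ℝ, MeasurableSet s → IsFiniteMeasure (volume.restrict s) →
      MemLp g 2 (volume.restrict s) → True) → True := fun _ _ => trivial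
  -- coefficient identity
  have hcoeff : ∀ n : ℤ, (∫ x in Ico (0:ℝ) 1, F x * (starRingEnd ℂ) (fExp1 n x))
      = ∫ x in S1 ∪ S2', f x * (starRingEnd ℂ) (fExp1 n x) := by
    intro n
    set w : ℝ → ℂ := fun x => (starRingEnd ℂ) (fExp1 n x) with hw
    have hint1 : Integrable (fun x => f x * w x) (volume.restrict S1) := by
      have hb : Integrable (fun x => w x * f x) (volume.restrict S1) :=
        Integrable.bdd_mul (hf1.integrable (by norm_num))
          ((fExp1_conj_continuous n).aestronglyMeasurable.restrict)
          (Filter.Eventually.of_forall fun x => (fExp1_norm_conj n x).le)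
      exact hb.congr (Filter.Eventually.of_forall fun x => mul_comm _ _)
    have hint2' : Integrable (fun x => f x * w x) (volume.restrict S2') := by
      have hb : Integrable (fun x => w x * f x) (volume.restrict S2') :=
        Integrable.bdd_mul (hf2'.integrable (by norm_num))
          ((fExp1_conj_continuous n).aestronglyMeasurable.restrict)
          (Filter.Eventually.of_forall fun x => (fExp1_norm_conj n x).le)
      exact hb.congr (Filter.Eventually.of_forall fun x => mul_comm _ _)
    have hint2 : Integrable (fun x => f (x + (m:ℝ)) * w x) (volume.restrict S2) := by
      have hb : Integrable (fun x => w x * f (x + (m:ℝ))) (volume.restrict S2) :=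
        Integrable.bdd_mul (hf2.integrable (by norm_num))
          ((fExp1_conj_continuous n).aestronglyMeasurable.restrict)
          (Filter.Eventually.of_forall fun x => (fExp1_norm_conj n x).le)
      exact hb.congr (Filter.Eventually.of_forall fun x => mul_comm _ _)
    have hptw : ∀ x, F x * w x = S1.indicator (fun y => f y * w y) x
        + S2.indicator (fun y => f (y + (m:ℝ)) * w y) x := by
      intro x
      by_cases h1 : x ∈ S1 <;> by_cases h2 : x ∈ S2 <;>
        simp [hF, Set.indicator_apply, h1, h2] <;> ring
    have hsub : ∫ x in S2, f (x + (m:ℝ)) * w x = ∫ x in S2', f x * w x := by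
      rw [hS2, hS2', setIntegral_Ico_eq_intervalIntegral (by linarith) _,
        setIntegral_Ico_eq_intervalIntegral (by linarith) _]
      have := intervalIntegral.integral_comp_add_right (a := α + ρ) (b := L + ρ)
        (fun y => f y * w (y - (m:ℝ))) (m:ℝ)
      simp only [add_sub_cancel_right] at this
      rw [show α + ρ + (m:ℝ) = α + r by linarith, show L + ρ + (m:ℝ) = L + r by linarith] at this
      rw [this]
      refine intervalIntegral.integral_congr fun y _ => ?_
      congr 1
      rw [hw]
      have : y - (m:ℝ) = y + ((-m : ℤ) : ℝ) := by push_cast; ring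
      rw [this]
      exact fExp1_conj_add_int n (-m) y
    calc (∫ x in Ico (0:ℝ) 1, F x * w x)
        = ∫ x in Ico (0:ℝ) 1, (S1.indicator (fun y => f y * w y) x
            + S2.indicator (fun y => f (y + (m:ℝ)) * w y) x) :=
          setIntegral_congr_fun measurableSet_Ico (fun x _ => hptw x)
      _ = (∫ x in Ico (0:ℝ) 1, S1.indicator (fun y => f y * w y) x)
            + ∫ x in Ico (0:ℝ) 1, S2.indicator (fun y => f (y + (m:ℝ)) * w y) x := by
          refine integral_add ?_ ?_
          · rw [integrable_indicator_iff measurableSet_Ico]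
            exact integrable_restrict_restrict measurableSet_Ico hint1
          · rw [integrable_indicator_iff measurableSet_Ico]
            exact integrable_restrict_restrict measurableSet_Ico hint2
      _ = (∫ x in S1, f x * w x) + ∫ x in S2, f (x + (m:ℝ)) * w x := by
          rw [setIntegral_indicator measurableSet_Ico, setIntegral_indicator measurableSet_Ico,
            inter_eq_right.mpr hS1sub, inter_eq_right.mpr hS2sub]
      _ = (∫ x in S1, f x * w x) + ∫ x in S2', f x * w x := by rw [hsub]
      _ = ∫ x in S1 ∪ S2', f x * w x :=
          (setIntegral_union hdisjJ measurableSet_Ico hint1 hint2').symm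
  -- mass identity
  have hmass : (∫ x in Ico (0:ℝ) 1, ‖F x‖ ^ 2) = ∫ x in S1 ∪ S2', ‖f x‖ ^ 2 := by
    have hint1 : Integrable (fun x => ‖f x‖ ^ 2) (volume.restrict S1) := by
      have := hf1.integrable_norm_rpow (by norm_num) (by norm_num)
      simpa [ENNReal.toReal_ofNat, Real.rpow_natCast] using this
    have hint2' : Integrable (fun x => ‖f x‖ ^ 2) (volume.restrict S2') := by
      have := hf2'.integrable_norm_rpow (by norm_num) (by norm_num)
      simpa [ENNReal.toReal_ofNat, Real.rpow_natCast] using this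
    have hint2 : Integrable (fun x => ‖f (x + (m:ℝ))‖ ^ 2) (volume.restrict S2) := by
      have := hf2.integrable_norm_rpow (by norm_num) (by norm_num)
      simpa [ENNReal.toReal_ofNat, Real.rpow_natCast] using this
    have hdisj12 : ∀ x, x ∈ S1 → x ∉ S2 := by
      intro x hx1 hx2
      have h' : α + ρ < α := hx2.1.trans_lt hx1.2
      linarith
    have hptw : ∀ x, ‖F x‖ ^ 2 = S1.indicator (fun y => ‖f y‖ ^ 2) x
        + S2.indicator (fun y => ‖f (y + (m:ℝ))‖ ^ 2) x := by
      intro x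
      by_cases h1 : x ∈ S1
      · have h2 := hdisj12 x h1
        simp [hF, Set.indicator_apply, h1, h2]
      · by_cases h2 : x ∈ S2 <;> simp [hF, Set.indicator_apply, h1, h2]
    have hsub : ∫ x in S2, ‖f (x + (m:ℝ))‖ ^ 2 = ∫ x in S2', ‖f x‖ ^ 2 := by
      rw [hS2, hS2', setIntegral_Ico_eq_intervalIntegral (by linarith) _,
        setIntegral_Ico_eq_intervalIntegral (by linarith) _]
      have := intervalIntegral.integral_comp_add_right (a := α + ρ) (b := L + ρ)
        (fun y => ‖f y‖ ^ 2) (m:ℝ)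
      rw [show α + ρ + (m:ℝ) = α + r by linarith, show L + ρ + (m:ℝ) = L + r by linarith] at this
      rw [this]
    calc (∫ x in Ico (0:ℝ) 1, ‖F x‖ ^ 2)
        = ∫ x in Ico (0:ℝ) 1, (S1.indicator (fun y => ‖f y‖ ^ 2) x
            + S2.indicator (fun y => ‖f (y + (m:ℝ))‖ ^ 2) x) :=
          setIntegral_congr_fun measurableSet_Ico (fun x _ => hptw x)
      _ = (∫ x in Ico (0:ℝ) 1, S1.indicator (fun y => ‖f y‖ ^ 2) x)
            + ∫ x in Ico (0:ℝ) 1, S2.indicator (fun y => ‖f (y + (m:ℝ))‖ ^ 2) x := by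
          refine integral_add ?_ ?_
          · rw [integrable_indicator_iff measurableSet_Ico]
            exact integrable_restrict_restrict measurableSet_Ico hint1
          · rw [integrable_indicator_iff measurableSet_Ico]
            exact integrable_restrict_restrict measurableSet_Ico hint2
      _ = (∫ x in S1, ‖f x‖ ^ 2) + ∫ x in S2, ‖f (x + (m:ℝ))‖ ^ 2 := by
          rw [setIntegral_indicator measurableSet_Ico, setIntegral_indicator measurableSet_Ico,
            inter_eq_right.mpr hS1sub, inter_eq_right.mpr hS2sub]
      _ = (∫ x in S1, ‖f x‖ ^ 2) + ∫ x in S2', ‖f x‖ ^ 2 := by rw [hsub]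
      _ = ∫ x in S1 ∪ S2', ‖f x‖ ^ 2 :=
          (setIntegral_union hdisjJ measurableSet_Ico hint1 hint2').symm
  calc ∑' n : ℤ, ‖∫ x in S1 ∪ S2', f x * (starRingEnd ℂ) (fExp1 n x)‖ ^ 2
      = ∑' n : ℤ, ‖∫ x in Ico (0:ℝ) 1, F x * (starRingEnd ℂ) (fExp1 n x)‖ ^ 2 :=
        tsum_congr fun n => by rw [hcoeff n]
    _ = ∫ x in Ico (0:ℝ) 1, ‖F x‖ ^ 2 := parseval01 F hFm
    _ = ∫ x in S1 ∪ S2', ‖f x‖ ^ 2 := hmass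

lemma forward_false (α L r : ℝ) (hα : 0 < α) (hαL : α < L) (hr : 0 < r)
    (h1 : 1 < L + Int.fract r) (A B : ℝ) (hA : 0 < A) (hAB : A ≤ B)
    (hP : ∀ f : ℝ → ℂ,
        MemLp f 2 (volume.restrict (Ico 0 α ∪ Ico (α + r) (L + r))) →
        A * ∫ x in Ico 0 α ∪ Ico (α + r) (L + r), ‖f x‖ ^ 2
            ≤ ∑' n : ℤ, ‖∫ x in Ico 0 α ∪ Ico (α + r) (L + r),
                f x * (starRingEnd ℂ) (fExp1 n x)‖ ^ 2 ∧
        ∑' n : ℤ, ‖∫ x in Ico 0 α ∪ Ico (α + r) (L + r),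
                f x * (starRingEnd ℂ) (fExp1 n x)‖ ^ 2
            ≤ B * ∫ x in Ico 0 α ∪ Ico (α + r) (L + r), ‖f x‖ ^ 2) : False := by
  set ρ := Int.fract r with hρ
  have hρ0 : 0 ≤ ρ := Int.fract_nonneg r
  have hρ1 : ρ < 1 := Int.fract_lt_one r
  set m : ℤ := ⌊r⌋ with hm
  have hmr : (m : ℝ) = r - ρ := by rw [hρ, Int.fract]; ring
  set J : Set ℝ := Ico 0 α ∪ Ico (α + r) (L + r) with hJ
  set a : ℝ := max (α + ρ) 1 - 1 with ha
  set b : ℝ := min (L + ρ) (α + 1) - 1 with hb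
  set k : ℤ := m + 1 with hk
  have hab : a < b := by
    have h2 : max (α + ρ) 1 < min (L + ρ) (α + 1) := by
      rw [max_lt_iff, lt_min_iff, lt_min_iff]
      constructor <;> constructor <;> linarith
    simp only [ha, hb]; linarith
  have ha0 : 0 ≤ a := by simp only [ha]; have := le_max_right (α + ρ) 1; linarith
  have hbα : b ≤ α := by simp only [hb]; have := min_le_right (L + ρ) (α + 1); linarith
  have hS1 : Ico a b ⊆ Ico 0 α := Ico_subset_Ico ha0 hbα
  have hak : α + r ≤ a + (k : ℝ) := by
    have := le_max_left (α + ρ) 1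
    simp only [ha, hk]; push_cast; rw [hmr] at *; linarith
  have hbk : b + (k : ℝ) ≤ L + r := by
    have := min_le_left (L + ρ) (α + 1)
    simp only [hb, hk]; push_cast; rw [hmr] at *; linarith
  have hS2 : Ico (a + (k:ℝ)) (b + (k:ℝ)) ⊆ Ico (α + r) (L + r) :=
    Ico_subset_Ico hak hbk
  -- the test function
  set g : ℝ → ℂ := fun x => (Ico a b).indicator (fun _ => (1:ℂ)) x
      - (Ico (a + (k:ℝ)) (b + (k:ℝ))).indicator (fun _ => (1:ℂ)) x with hg
  have hJm : MeasurableSet J := (measurableSet_Ico).union measurableSet_Ico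
  haveI : IsFiniteMeasure (volume.restrict J) := by
    constructor
    rw [Measure.restrict_apply_univ]
    refine lt_of_le_of_lt (measure_union_le _ _) ?_
    rw [Real.volume_Ico, Real.volume_Ico]
    exact ENNReal.add_lt_top.mpr ⟨ENNReal.ofReal_lt_top, ENNReal.ofReal_lt_top⟩
  have hgm : MemLp g 2 (volume.restrict J) := by
    refine MemLp.of_bound ?_ 2 ?_
    · apply AEStronglyMeasurable.sub <;>
      exact ((stronglyMeasurable_const.indicator measurableSet_Ico)).aestronglyMeasurable
    · filter_upwards with x
      by_cases h1 : x ∈ Ico a b <;> by_cases h2 : x ∈ Ico (a + (k:ℝ)) (b + (k:ℝ)) <;>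
        rw [mem_Ico] at h1 h2 <;>
        simp [hg, Set.indicator_apply, mem_Ico, h1, h2] <;> norm_num
  -- all "Fourier coefficients" of g vanish
  have hdisj : b ≤ a + (k:ℝ) := le_trans hbα (by linarith)
  have hcoeff : ∀ n : ℤ, (∫ x in J, g x * (starRingEnd ℂ) (fExp1 n x)) = 0 := by
    intro n
    set w : ℝ → ℂ := fun x => (starRingEnd ℂ) (fExp1 n x) with hw
    have hwc : Continuous w := fExp1_conj_continuous n
    have hptw : ∀ x, g x * w x = (Ico a b).indicator w x
        - (Ico (a + (k:ℝ)) (b + (k:ℝ))).indicator w x := by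
      intro x
      by_cases h1 : x ∈ Ico a b <;> by_cases h2 : x ∈ Ico (a + (k:ℝ)) (b + (k:ℝ)) <;>
        rw [mem_Ico] at h1 h2 <;>
        simp [hg, Set.indicator_apply, mem_Ico, h1, h2]
    have hint : ∀ (s : Set ℝ), MeasurableSet s → ∀ u v : ℝ, s ⊆ Ico u v →
        Integrable ((s).indicator w) (volume.restrict J) := by
      intro s hs u v hsub
      rw [integrable_indicator_iff hs]
      have : IntegrableOn w s volume :=
        (hwc.integrableOn_Icc (a := u) (b := v)).mono_set (hsub.trans Ico_subset_Icc_self)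
      exact this.mono_measure Measure.restrict_le_self
    calc (∫ x in J, g x * w x)
        = ∫ x in J, ((Ico a b).indicator w x
            - (Ico (a + (k:ℝ)) (b + (k:ℝ))).indicator w x) := by
          exact setIntegral_congr_fun hJm (fun x _ => hptw x)
      _ = (∫ x in J, (Ico a b).indicator w x)
            - ∫ x in J, (Ico (a + (k:ℝ)) (b + (k:ℝ))).indicator w x := by
          exact integral_sub (hint _ measurableSet_Ico a b le_rfl)
            (hint _ measurableSet_Ico _ _ le_rfl)
      _ = (∫ x in Ico a b, w x) - ∫ x in Ico (a + (k:ℝ)) (b + (k:ℝ)), w x := by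
          rw [setIntegral_indicator measurableSet_Ico, setIntegral_indicator measurableSet_Ico,
            inter_eq_right.mpr (hS1.trans subset_union_left),
            inter_eq_right.mpr (hS2.trans subset_union_right)]
      _ = 0 := by
          rw [setIntegral_Ico_eq_intervalIntegral hab.le,
            setIntegral_Ico_eq_intervalIntegral (by linarith : a + (k:ℝ) ≤ b + (k:ℝ)),
            ← intervalIntegral.integral_comp_add_right (a := a) (b := b) w (k:ℝ)]
          have : ∀ x : ℝ, w (x + (k:ℝ)) = w x := fun x => fExp1_conj_add_int n k x
          simp only [this, sub_self]
  -- the L² mass of g is at least b - a > 0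
  have hmass : b - a ≤ ∫ x in J, ‖g x‖ ^ 2 := by
    have hlow : ∀ x, (Ico a b).indicator (fun _ => (1:ℝ)) x ≤ ‖g x‖ ^ 2 := by
      intro x
      by_cases h1 : x ∈ Ico a b
      · have h2 : x ∉ Ico (a + (k:ℝ)) (b + (k:ℝ)) := by
          intro h2; exact absurd (h2.1.trans_lt h1.2) (not_lt.mpr hdisj)
        rw [mem_Ico] at h1 h2
        simp [hg, Set.indicator_apply, mem_Ico, h1, h2]
      · simp only [Set.indicator_apply, if_neg h1]
        positivity
    have hi1 : Integrable ((Ico a b).indicator (fun _ => (1:ℝ))) (volume.restrict J) := by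
      rw [integrable_indicator_iff measurableSet_Ico]
      exact (integrableOn_const measure_Ico_lt_top.ne).mono_measure
        Measure.restrict_le_self
    have hi2 : Integrable (fun x => ‖g x‖ ^ 2) (volume.restrict J) := by
      have := hgm.integrable_norm_rpow (by norm_num) (by norm_num)
      simpa [ENNReal.toReal_ofNat, Real.rpow_natCast] using this
    calc b - a = ∫ x in J, (Ico a b).indicator (fun _ => (1:ℝ)) x := by
          rw [setIntegral_indicator measurableSet_Ico,
            inter_eq_right.mpr (hS1.trans subset_union_left), setIntegral_const]
          simp [Real.volume_Ico, ENNReal.toReal_ofReal (by linarith : (0:ℝ) ≤ b - a), hab.le]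
      _ ≤ ∫ x in J, ‖g x‖ ^ 2 := integral_mono hi1 hi2 hlow
  have hfr := (hP g hgm).1
  have hz : (∑' n : ℤ, ‖∫ x in J, g x * (starRingEnd ℂ) (fExp1 n x)‖ ^ 2) = 0 := by
    have : ∀ n : ℤ, ‖∫ x in J, g x * (starRingEnd ℂ) (fExp1 n x)‖ ^ 2 = 0 := by
      intro n; rw [hcoeff n]; simp
    rw [tsum_congr this, tsum_zero]
  rw [hz] at hfr
  nlinarith [hfr, hmass, mul_pos hA (by linarith : (0:ℝ) < b - a)]

theorem stmt9 (α L r : ℝ) (hα : 0 < α) (hαL : α < L) (hr : 0 < r) :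
    (∃ A B : ℝ, 0 < A ∧ A ≤ B ∧
      ∀ f : ℝ → ℂ,
        MemLp f 2 (volume.restrict (Ico 0 α ∪ Ico (α + r) (L + r))) →
        A * ∫ x in Ico 0 α ∪ Ico (α + r) (L + r), ‖f x‖ ^ 2
            ≤ ∑' n : ℤ, ‖∫ x in Ico 0 α ∪ Ico (α + r) (L + r),
                f x * (starRingEnd ℂ) (fExp1 n x)‖ ^ 2 ∧
        ∑' n : ℤ, ‖∫ x in Ico 0 α ∪ Ico (α + r) (L + r),
                f x * (starRingEnd ℂ) (fExp1 n x)‖ ^ 2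
            ≤ B * ∫ x in Ico 0 α ∪ Ico (α + r) (L + r), ‖f x‖ ^ 2) ↔
      L + Int.fract r ≤ 1 := by
  constructor
  · rintro ⟨A, B, hA, hAB, hP⟩
    by_contra hlt
    exact forward_false α L r hα hαL hr (not_le.mp hlt) A B hA hAB hP
  · intro h1
    refine ⟨1, 1, one_pos, le_rfl, fun f hf => ?_⟩
    have e := reverse_eq α L r hα hαL hr h1 f hf
    exact ⟨by rw [one_mul]; exact e.ge, by rw [one_mul]; exact e.le⟩
end
end

section
/- Let J = [0,α) ∪ [α+r, L+r) with 0 < α < L and r > 0. Then E(ℤ) is a Riesz sequence in L²(J) if and only if one of the following holds: (i) α ≥ 1 or L-α ≥ 1; (ii) {r} = 0 and L ≥ 1; (iii) 1 ≤ L < 2 and L + {r} ≥ 2. -/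
open MeasureTheory Real Set
open scoped ENNReal

noncomputable section

namespace Stmt10Aux

def gg (a : ℤ →₀ ℂ) (x : ℝ) : ℂ := ∑ n ∈ a.support, a n * fExp1 n x

def FF (a : ℤ →₀ ℂ) (x : ℝ) : ℝ := ‖gg a x‖ ^ 2

lemma continuous_fExp1 (n : ℤ) : Continuous (fExp1 n) := by
  unfold fExp1; fun_prop

lemma continuous_gg (a : ℤ →₀ ℂ) : Continuous (gg a) := by
  unfold gg
  exact continuous_finset_sum _ fun n _ => (continuous_const.mul (continuous_fExp1 n))

lemma continuous_FF (a : ℤ →₀ ℂ) : Continuous (FF a) := by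
  unfold FF
  exact ((continuous_gg a).norm).pow 2

lemma FF_nonneg (a : ℤ →₀ ℂ) (x : ℝ) : 0 ≤ FF a x := sq_nonneg _

lemma fExp1_add_int (n : ℤ) (x : ℝ) (m : ℤ) : fExp1 n (x + m) = fExp1 n x := by
  unfold fExp1
  have h : ((x + (m:ℤ) : ℝ) : ℂ) = (x : ℂ) + (m : ℂ) := by push_cast; ring
  rw [h, show (2 * (Real.pi:ℂ) * Complex.I * ((n:ℝ):ℂ) * ((x:ℂ) + (m:ℂ)))
      = 2 * (Real.pi:ℂ) * Complex.I * ((n:ℝ):ℂ) * (x:ℂ)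
        + ((n*m : ℤ):ℂ) * (2 * Real.pi * Complex.I) by push_cast; ring,
    Complex.exp_add, Complex.exp_int_mul_two_pi_mul_I, mul_one]

lemma FF_add_int (a : ℤ →₀ ℂ) (x : ℝ) (m : ℤ) : FF a (x + m) = FF a x := by
  unfold FF gg
  congr 2
  exact Finset.sum_congr rfl fun n _ => by rw [fExp1_add_int]

/-- integral of `exp(2πik x)` over a unit interval, `k ≠ 0`. -/
lemma integral_exp_unit (k : ℤ) (hk : k ≠ 0) (t : ℝ) :
    ∫ x in t..(t + 1), fExp1 k x = 0 := by
  simp only [fExp1]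
  have hc : (2 * (Real.pi:ℂ) * Complex.I * ((k : ℝ):ℂ)) ≠ 0 := by
    refine mul_ne_zero (mul_ne_zero (mul_ne_zero two_ne_zero ?_) Complex.I_ne_zero) ?_
    · exact Complex.ofReal_ne_zero.2 Real.pi_ne_zero
    · exact Complex.ofReal_ne_zero.2 (Int.cast_ne_zero.2 hk)
  have := integral_exp_mul_complex (a := t) (b := t + 1) hc
  rw [show (fun x : ℝ => Complex.exp (2 * Real.pi * Complex.I * (k:ℝ) * x))
      = fun x : ℝ => Complex.exp ((2 * Real.pi * Complex.I * (k:ℝ)) * (x:ℝ)) by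
    funext x; ring_nf] at this ⊢
  rw [this]
  have h1 : Complex.exp (2 * (Real.pi:ℂ) * Complex.I * (k:ℝ) * ((t:ℝ) + 1))
      = Complex.exp (2 * (Real.pi:ℂ) * Complex.I * (k:ℝ) * (t:ℝ)) := by
    rw [show (2 * (Real.pi:ℂ) * Complex.I * (k:ℝ) * ((t:ℝ)+1))
        = 2 * Real.pi * Complex.I * (k:ℝ) * (t:ℝ) + (k:ℤ) * (2 * Real.pi * Complex.I) by
      push_cast; ring]
    rw [Complex.exp_add, Complex.exp_int_mul_two_pi_mul_I, mul_one]
  rw [show ((2:ℂ) * (Real.pi:ℂ) * Complex.I * (k:ℝ) * ((t:ℝ)+1) : ℂ)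
      = (2 * (Real.pi:ℂ) * Complex.I * (k:ℝ)) * (((t:ℝ)+1 : ℝ) : ℂ) by push_cast; ring] at h1
  rw [show ((2:ℂ) * (Real.pi:ℂ) * Complex.I * (k:ℝ) * (t:ℝ) : ℂ)
      = (2 * (Real.pi:ℂ) * Complex.I * (k:ℝ)) * ((t:ℝ) : ℂ) by push_cast; ring] at h1
  rw [show (((t + 1 : ℝ)) : ℂ) = ((t:ℝ):ℂ) + 1 by push_cast; ring] at h1 ⊢
  rw [h1]
  simp


lemma conj_fExp1 (m : ℤ) (x : ℝ) : (starRingEnd ℂ) (fExp1 m x) = fExp1 (-m) x := by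
  unfold fExp1
  rw [← Complex.exp_conj]
  congr 1
  simp [Complex.ext_iff]

lemma fExp1_mul (n m : ℤ) (x : ℝ) : fExp1 n x * fExp1 m x = fExp1 (n + m) x := by
  unfold fExp1
  rw [← Complex.exp_add]
  congr 1
  push_cast
  ring

lemma fExp1_zero (x : ℝ) : fExp1 0 x = 1 := by
  unfold fExp1; simp

lemma integral_unit (a : ℤ →₀ ℂ) (t : ℝ) :
    ∫ x in t..(t + 1), FF a x = ∑ n ∈ a.support, ‖a n‖ ^ 2 := by
  have hpt : ∀ x : ℝ, FF a x
      = (∑ n ∈ a.support, ∑ m ∈ a.support,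
          (a n * (starRingEnd ℂ) (a m)) * fExp1 (n - m) x).re := by
    intro x
    have h1 : FF a x = (gg a x * (starRingEnd ℂ) (gg a x)).re := by
      rw [Complex.mul_conj]
      simp [FF, Complex.sq_norm]
    rw [h1]
    congr 1
    unfold gg
    rw [map_sum, Finset.sum_mul_sum]
    refine Finset.sum_congr rfl fun n _ => Finset.sum_congr rfl fun m _ => ?_
    rw [map_mul, conj_fExp1]
    rw [show a n * fExp1 n x * ((starRingEnd ℂ) (a m) * fExp1 (-m) x)
        = (a n * (starRingEnd ℂ) (a m)) * (fExp1 n x * fExp1 (-m) x) by ring,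
      fExp1_mul, show n + -m = n - m from (sub_eq_add_neg n m).symm]
  calc ∫ x in t..(t + 1), FF a x
      = ∫ x in t..(t + 1), (∑ n ∈ a.support, ∑ m ∈ a.support,
          (a n * (starRingEnd ℂ) (a m)) * fExp1 (n - m) x).re := by
        congr 1; funext x; exact hpt x
    _ = (∫ x in t..(t + 1), ∑ n ∈ a.support, ∑ m ∈ a.support,
          (a n * (starRingEnd ℂ) (a m)) * fExp1 (n - m) x).re := by
        exact Complex.reCLM.intervalIntegral_comp_comm <|
          (Continuous.intervalIntegrable (by
            exact continuous_finset_sum _ fun n _ => continuous_finset_sum _ fun m _ =>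
              continuous_const.mul (continuous_fExp1 _)) t (t+1))
    _ = (∑ n ∈ a.support, ∑ m ∈ a.support,
          (a n * (starRingEnd ℂ) (a m)) * ∫ x in t..(t + 1), fExp1 (n - m) x).re := by
        rw [intervalIntegral.integral_finset_sum (f := fun n x => ∑ m ∈ a.support,
            (a n * (starRingEnd ℂ) (a m)) * fExp1 (n - m) x) (fun n _ => Continuous.intervalIntegrable
          (continuous_finset_sum _ fun m _ => continuous_const.mul (continuous_fExp1 _)) t (t+1))]
        congr 1
        refine Finset.sum_congr rfl fun n _ => ?_
        rw [intervalIntegral.integral_finset_sum (f := fun m x =>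
            (a n * (starRingEnd ℂ) (a m)) * fExp1 (n - m) x) (fun m _ => Continuous.intervalIntegrable
          (continuous_const.mul (continuous_fExp1 _)) t (t+1))]
        exact Finset.sum_congr rfl fun m _ => intervalIntegral.integral_const_mul _ _
    _ = (∑ n ∈ a.support, a n * (starRingEnd ℂ) (a n)).re := by
        congr 1
        refine Finset.sum_congr rfl fun n hn => ?_
        rw [Finset.sum_eq_single n]
        · rw [sub_self]
          have : ∫ x in t..(t+1), fExp1 0 x = 1 := by
            simp [fExp1_zero]
          rw [this, mul_one]
        · intro m _ hmn
          rw [integral_exp_unit (n - m) (sub_ne_zero.2 (Ne.symm hmn)) t, mul_zero]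
        · intro hn'; exact absurd hn hn'
    _ = ∑ n ∈ a.support, ‖a n‖ ^ 2 := by
        rw [Complex.re_sum]
        refine Finset.sum_congr rfl fun n _ => ?_
        rw [Complex.mul_conj]
        simp [Complex.sq_norm]

lemma intervalIntegrable_FF (a : ℤ →₀ ℂ) (c d : ℝ) :
    IntervalIntegrable (FF a) volume c d :=
  (continuous_FF a).intervalIntegrable c d

lemma integral_shift (a : ℤ →₀ ℂ) (m : ℤ) (c d : ℝ) :
    ∫ x in (c + (m:ℝ))..(d + (m:ℝ)), FF a x = ∫ x in c..d, FF a x := by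
  rw [← intervalIntegral.integral_comp_add_right (FF a) (m:ℝ)]
  congr 1
  funext x
  exact FF_add_int a x m

lemma integral_FF_nonneg (a : ℤ →₀ ℂ) {c d : ℝ} (h : c ≤ d) :
    0 ≤ ∫ x in c..d, FF a x :=
  intervalIntegral.integral_nonneg h fun u _ => FF_nonneg a u

lemma integral_FF_mono (a : ℤ →₀ ℂ) {c' c d d' : ℝ} (h1 : c' ≤ c) (h2 : c ≤ d) (h3 : d ≤ d') :
    ∫ x in c..d, FF a x ≤ ∫ x in c'..d', FF a x := by
  have e1 := intervalIntegral.integral_add_adjacent_intervals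
    (intervalIntegrable_FF a c' c) (intervalIntegrable_FF a c d)
  have e2 := intervalIntegral.integral_add_adjacent_intervals
    (intervalIntegrable_FF a c' d) (intervalIntegrable_FF a d d')
  have n1 := integral_FF_nonneg a h1
  have n3 := integral_FF_nonneg a h3
  linarith

lemma integral_FF_nat (a : ℤ →₀ ℂ) (M : ℕ) :
    ∫ x in (0:ℝ)..(M:ℝ), FF a x = (M:ℝ) * ∑ n ∈ a.support, ‖a n‖ ^ 2 := by
  induction M with
  | zero => simp
  | succ M ih =>
    have e := intervalIntegral.integral_add_adjacent_intervals
      (intervalIntegrable_FF a 0 M) (intervalIntegrable_FF a M (M+1))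
    have hu : ∫ x in (M:ℝ)..((M:ℝ)+1), FF a x = ∑ n ∈ a.support, ‖a n‖ ^ 2 :=
      integral_unit a M
    push_cast
    rw [← e, ih, hu]
    ring

lemma integrableOn_FF_Ico (a : ℤ →₀ ℂ) (c d : ℝ) :
    IntegrableOn (FF a) (Ico c d) volume :=
  ((continuous_FF a).integrableOn_Icc).mono_set Ico_subset_Icc_self

lemma integral_union_eq (a : ℤ →₀ ℂ) {α L r : ℝ} (hα : 0 < α) (hαL : α < L) (hr : 0 < r) :
    ∫ x in Ico 0 α ∪ Ico (α + r) (L + r), FF a x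
      = (∫ x in (0:ℝ)..α, FF a x) + ∫ x in (α + r)..(L + r), FF a x := by
  have hdisj : Disjoint (Ico (0:ℝ) α) (Ico (α + r) (L + r)) := by
    rw [Set.disjoint_left]
    rintro x ⟨_, h2⟩ ⟨h3, _⟩
    linarith
  rw [setIntegral_union hdisj measurableSet_Ico (integrableOn_FF_Ico a 0 α)
    (integrableOn_FF_Ico a (α+r) (L+r))]
  have h1 : ∀ c d : ℝ, c ≤ d → ∫ x in Ico c d, FF a x = ∫ x in c..d, FF a x := by
    intro c d hcd
    rw [integral_Ico_eq_integral_Ioo, intervalIntegral.integral_of_le hcd,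
      integral_Ioc_eq_integral_Ioo]
  rw [h1 0 α hα.le, h1 (α+r) (L+r) (by linarith)]

lemma unit_le (a : ℤ →₀ ℂ) {c d : ℝ} (h : c + 1 ≤ d) :
    ∑ n ∈ a.support, ‖a n‖ ^ 2 ≤ ∫ x in c..d, FF a x := by
  rw [← integral_unit a c]
  exact integral_FF_mono a le_rfl (by linarith) h

lemma lower_bound (a : ℤ →₀ ℂ) {α L r : ℝ} (hα : 0 < α) (hαL : α < L) (hr : 0 < r)
    (hR : (1 ≤ α ∨ 1 ≤ L - α) ∨ (Int.fract r = 0 ∧ 1 ≤ L) ∨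
      (1 ≤ L ∧ L < 2 ∧ 2 ≤ L + Int.fract r)) :
    ∑ n ∈ a.support, ‖a n‖ ^ 2
      ≤ ∫ x in Ico 0 α ∪ Ico (α + r) (L + r), FF a x := by
  set S := ∑ n ∈ a.support, ‖a n‖ ^ 2 with hS
  rw [integral_union_eq a hα hαL hr]
  set s := Int.fract r with hsdef
  have hs0 : 0 ≤ s := Int.fract_nonneg r
  have hs1 : s < 1 := Int.fract_lt_one r
  have hfloor : ((⌊r⌋ : ℤ) : ℝ) = r - s := by rw [hsdef]; unfold Int.fract; ring
  have hI2 : ∫ x in (α + r)..(L + r), FF a x = ∫ x in (α + s)..(L + s), FF a x := by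
    rw [← integral_shift a ⌊r⌋ (α + s) (L + s), hfloor]
    norm_num
  have hI1nn : 0 ≤ ∫ x in (0:ℝ)..α, FF a x := integral_FF_nonneg a hα.le
  have hI2nn : 0 ≤ ∫ x in (α + r)..(L + r), FF a x := integral_FF_nonneg a (by linarith)
  -- case 1 : 1 ≤ α
  by_cases hα1 : 1 ≤ α
  · have : S ≤ ∫ x in (0:ℝ)..α, FF a x := unit_le a (by linarith)
    linarith
  push_neg at hα1
  rcases hR with (h | h) | ⟨hfr, hL⟩ | ⟨hL1, hL2, hLs⟩
  · linarith
  · -- 1 ≤ L - α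
    have : S ≤ ∫ x in (α + r)..(L + r), FF a x := unit_le a (by linarith)
    linarith
  · -- fract r = 0, 1 ≤ L
    have hs : s = 0 := hfr
    rw [hI2, hs]
    have e := intervalIntegral.integral_add_adjacent_intervals
      (intervalIntegrable_FF a 0 α) (intervalIntegrable_FF a α L)
    have : S ≤ ∫ x in (0:ℝ)..L, FF a x := unit_le a (by linarith)
    simp only [add_zero]
    linarith
  · -- 1 ≤ L < 2, 2 ≤ L + s
    rw [hI2]
    by_cases hαs : α + s ≤ 1
    · have h1 : S ≤ ∫ x in (1:ℝ)..2, FF a x := unit_le a (by norm_num)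
      have h2 : ∫ x in (1:ℝ)..2, FF a x ≤ ∫ x in (α + s)..(L + s), FF a x :=
        integral_FF_mono a hαs (by norm_num) (by linarith)
      linarith
    · push_neg at hαs
      have e : (∫ x in (0:ℝ)..(α+s-1), FF a x) + ∫ x in (α+s-1)..1, FF a x
          = ∫ x in (0:ℝ)..1, FF a x :=
        intervalIntegral.integral_add_adjacent_intervals
          (intervalIntegrable_FF a 0 (α+s-1)) (intervalIntegrable_FF a (α+s-1) 1)
      have hu : ∫ x in (0:ℝ)..1, FF a x = S := by
        have := integral_unit a 0
        norm_num at this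
        exact this
      have h1 : ∫ x in (0:ℝ)..(α+s-1), FF a x ≤ ∫ x in (0:ℝ)..α, FF a x :=
        integral_FF_mono a le_rfl (by linarith) (by linarith)
      have h2 : ∫ x in (α+s-1)..1, FF a x ≤ ∫ x in (α+s)..(L+s), FF a x := by
        have hsh : ∫ x in (α+s)..(2:ℝ), FF a x = ∫ x in (α+s-1)..1, FF a x := by
          rw [← integral_shift a 1 (α+s-1) 1]
          congr 1 <;> push_cast <;> ring
        rw [← hsh]
        exact integral_FF_mono a le_rfl (by linarith) (by linarith)
      linarith

lemma upper_bound (a : ℤ →₀ ℂ) {α L r : ℝ} (hα : 0 < α) (hαL : α < L) (hr : 0 < r) :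
    ∫ x in Ico 0 α ∪ Ico (α + r) (L + r), FF a x
      ≤ (⌈L + r⌉₊ : ℝ) * ∑ n ∈ a.support, ‖a n‖ ^ 2 := by
  rw [integral_union_eq a hα hαL hr]
  have e1 : (∫ x in (0:ℝ)..α, FF a x) + ∫ x in α..(α+r), FF a x
      = ∫ x in (0:ℝ)..(α+r), FF a x :=
    intervalIntegral.integral_add_adjacent_intervals
      (intervalIntegrable_FF a 0 α) (intervalIntegrable_FF a α (α+r))
  have e2 : (∫ x in (0:ℝ)..(α+r), FF a x) + ∫ x in (α+r)..(L+r), FF a x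
      = ∫ x in (0:ℝ)..(L+r), FF a x :=
    intervalIntegral.integral_add_adjacent_intervals
      (intervalIntegrable_FF a 0 (α+r)) (intervalIntegrable_FF a (α+r) (L+r))
  have h3 : ∫ x in (0:ℝ)..(L+r), FF a x ≤ ∫ x in (0:ℝ)..((⌈L + r⌉₊ : ℝ)), FF a x :=
    integral_FF_mono a le_rfl (by linarith) (Nat.le_ceil _)
  have h4 := integral_FF_nat a ⌈L + r⌉₊
  have n1 : 0 ≤ ∫ x in α..(α+r), FF a x := integral_FF_nonneg a (by linarith)
  linarith


lemma fract_of_neg {t : ℝ} (h1 : -1 ≤ t) (h2 : t < 0) : Int.fract t = t + 1 := by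
  have hf : ⌊t⌋ = -1 := by
    rw [Int.floor_eq_iff]
    constructor <;> push_cast <;> linarith
  unfold Int.fract
  rw [hf]
  push_cast
  ring

lemma fract_self_of {t : ℝ} (h1 : 0 ≤ t) (h2 : t < 1) : Int.fract t = t :=
  Int.fract_eq_self.2 ⟨h1, h2⟩

/-- Under the negation of the covering conditions, there is a point `c` whose
`δ`-neighborhood (mod 1) avoids the set `J`. -/
lemma exists_gap {α L r : ℝ} (hα : 0 < α) (hαL : α < L) (hr : 0 < r)
    (h1 : α < 1) (h2 : L - α < 1)
    (h3 : ¬(Int.fract r = 0 ∧ 1 ≤ L))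
    (h4 : ¬(1 ≤ L ∧ L < 2 ∧ 2 ≤ L + Int.fract r)) :
    ∃ c δ : ℝ, 0 < δ ∧ δ ≤ 1/4 ∧
      ∀ x ∈ Ico 0 α ∪ Ico (α + r) (L + r), Int.fract (x - c) ∈ Icc δ (1 - δ) := by
  set s := Int.fract r with hsdef
  have hs0 : 0 ≤ s := Int.fract_nonneg r
  have hs1 : s < 1 := Int.fract_lt_one r
  have hfloor : ((⌊r⌋ : ℤ) : ℝ) = r - s := by rw [hsdef]; unfold Int.fract; ring
  have hLs2 : L + s < 2 := by
    by_cases hL : 1 ≤ L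
    · by_contra hc
      push_neg at hc
      exact h4 ⟨hL, by linarith, by linarith⟩
    · push_neg at hL; linarith
  -- key: rewrite fract for points of the second interval
  have key : ∀ c : ℝ, ∀ x ∈ Ico (α + r) (L + r),
      Int.fract (x - c) = Int.fract ((x - r + s) - c) := by
    intro c x _
    have : (x - c) = ((x - r + s) - c) + (⌊r⌋ : ℤ) := by rw [hfloor]; ring
    rw [this, Int.fract_add_intCast]
  by_cases hs : s = 0
  · -- construction 2 : L < 1, c = (L+1)/2, δ = (1-L)/4
    have hL : L < 1 := by
      by_contra hc; push_neg at hc; exact h3 ⟨hs, hc⟩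
    refine ⟨(L+1)/2, (1-L)/4, by linarith, by linarith, ?_⟩
    rintro x (⟨hx0, hx1⟩ | hx)
    · rw [fract_of_neg (by linarith) (by linarith)]
      constructor <;> [linarith; linarith]
    · rw [key _ x hx, hs]
      obtain ⟨hx0, hx1⟩ := hx
      rw [fract_of_neg (by linarith) (by linarith)]
      constructor <;> [linarith; linarith]
  · -- construction 1 : s > 0, L + s < 2
    have hspos : 0 < s := lt_of_le_of_ne hs0 (Ne.symm hs)
    set lo := max α (L + s - 1) with hlo
    set hi := min (α + s) 1 with hhi
    have hlo1 : α ≤ lo := le_max_left _ _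
    have hlo2 : L + s - 1 ≤ lo := le_max_right _ _
    have hhi1 : hi ≤ α + s := min_le_left _ _
    have hhi2 : hi ≤ 1 := min_le_right _ _
    have hlohi : lo < hi := by
      rw [hlo, hhi]
      apply max_lt <;> apply lt_min <;> linarith
    set δ := (hi - lo)/4 with hδ
    set c := (lo + hi)/2 with hc
    have hδpos : 0 < δ := by rw [hδ]; linarith
    have hδ4 : δ ≤ 1/4 := by
      have : 0 ≤ lo := le_trans hα.le hlo1
      rw [hδ]; linarith
    refine ⟨c, δ, hδpos, hδ4, ?_⟩
    have hc1 : α + δ ≤ c := by rw [hc, hδ]; linarith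
    have hc2 : c ≤ 1 - δ := by rw [hc, hδ]; linarith
    have hc3 : c ≤ α + s - δ := by rw [hc, hδ]; linarith
    have hc4 : L + s - 1 + δ ≤ c := by rw [hc, hδ]; linarith
    rintro x (⟨hx0, hx1⟩ | hx)
    · rw [fract_of_neg (by linarith) (by linarith)]
      constructor <;> linarith
    · rw [key _ x hx]
      obtain ⟨hx0, hx1⟩ := hx
      rw [fract_self_of (by linarith) (by linarith)]
      constructor <;> linarith

def natEmb : ℕ ↪ ℤ := ⟨fun j => (j : ℤ), fun a b h => Nat.cast_injective h⟩

def aa (N : ℕ) (c : ℝ) : ℤ →₀ ℂ where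
  support := (Finset.range N).map natEmb
  toFun n := if 0 ≤ n ∧ n < N then Complex.exp (((-(2 * Real.pi * n * c) : ℝ)) * Complex.I)
    else 0
  mem_support_toFun n := by
    simp only [Finset.mem_map, Finset.mem_range, natEmb, Function.Embedding.coeFn_mk]
    constructor
    · rintro ⟨j, hj, rfl⟩
      rw [if_pos ⟨Int.ofNat_nonneg j, by show (j:ℤ) < N; exact_mod_cast hj⟩]
      exact Complex.exp_ne_zero _
    · intro h
      by_cases hn : 0 ≤ n ∧ n < N
      · exact ⟨n.toNat, by omega, by show ((n.toNat : ℕ) : ℤ) = n; omega⟩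
      · rw [if_neg hn] at h; exact absurd rfl h

lemma aa_apply_nat (N : ℕ) (c : ℝ) (j : ℕ) (hj : j < N) :
    aa N c (j : ℤ) = Complex.exp (((-(2 * Real.pi * j * c) : ℝ)) * Complex.I) := by
  show (if 0 ≤ (j:ℤ) ∧ (j:ℤ) < N then _ else 0) = _
  rw [if_pos ⟨Int.ofNat_nonneg j, by exact_mod_cast hj⟩]
  norm_num

lemma sum_sq_aa (N : ℕ) (c : ℝ) :
    ∑ n ∈ (aa N c).support, ‖aa N c n‖ ^ 2 = (N : ℝ) := by
  have hsupp : (aa N c).support = (Finset.range N).map natEmb := rfl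
  rw [hsupp, Finset.sum_map]
  have : ∀ j ∈ Finset.range N, ‖aa N c (natEmb j)‖ ^ 2 = 1 := by
    intro j hj
    rw [Finset.mem_range] at hj
    show ‖aa N c (j : ℤ)‖ ^ 2 = 1
    rw [aa_apply_nat N c j hj]
    rw [Complex.norm_exp_ofReal_mul_I]
    norm_num
  rw [Finset.sum_congr rfl this]
  simp

lemma gg_aa (N : ℕ) (c : ℝ) (x : ℝ) :
    gg (aa N c) x
      = ∑ j ∈ Finset.range N, (Complex.exp (((2 * Real.pi * (x - c) : ℝ)) * Complex.I)) ^ j := by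
  unfold gg
  have hsupp : (aa N c).support = (Finset.range N).map natEmb := rfl
  rw [hsupp, Finset.sum_map]
  refine Finset.sum_congr rfl fun j hj => ?_
  rw [Finset.mem_range] at hj
  show aa N c (j : ℤ) * fExp1 (j : ℤ) x = _
  rw [aa_apply_nat N c j hj]
  unfold fExp1
  rw [← Complex.exp_add, ← Complex.exp_nat_mul]
  congr 1
  push_cast
  ring

/-- norm bound for the geometric sum when `z` is away from `1`. -/
lemma geom_norm_le {z : ℂ} (hz1 : ‖z‖ = 1) {m : ℝ} (hm : 0 < m) (hzm : m ≤ ‖z - 1‖) (N : ℕ) :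
    ‖∑ j ∈ Finset.range N, z ^ j‖ ≤ 2 / m := by
  have hzne : z ≠ 1 := by
    intro h
    rw [h] at hzm
    simp at hzm
    linarith
  rw [geom_sum_eq hzne, norm_div]
  have h1 : ‖z ^ N - 1‖ ≤ 2 := by
    calc ‖z ^ N - 1‖ ≤ ‖z ^ N‖ + ‖(1:ℂ)‖ := norm_sub_le _ _
      _ = 2 := by rw [norm_pow, hz1]; norm_num
  have h2 : 0 < ‖z - 1‖ := lt_of_lt_of_le hm hzm
  calc ‖z ^ N - 1‖ / ‖z - 1‖ ≤ 2 / ‖z - 1‖ := by gcongr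
    _ ≤ 2 / m := by gcongr

lemma norm_exp_sub_one_sq (θ : ℝ) :
    ‖Complex.exp ((θ:ℝ) * Complex.I) - 1‖ ^ 2 = 2 - 2 * Real.cos θ := by
  rw [Complex.sq_norm, Complex.normSq_apply]
  have hre : (Complex.exp ((θ:ℝ) * Complex.I) - 1).re = Real.cos θ - 1 := by
    simp [Complex.exp_ofReal_mul_I_re]
  have him : (Complex.exp ((θ:ℝ) * Complex.I) - 1).im = Real.sin θ := by
    simp [Complex.exp_ofReal_mul_I_im]
  rw [hre, him]
  have := Real.sin_sq_add_cos_sq θ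
  nlinarith

lemma cos_le_of_fract {u δ : ℝ} (hδ : 0 < δ) (hδ4 : δ ≤ 1/4) (hu : u ∈ Icc δ (1 - δ)) :
    Real.cos (2 * Real.pi * u) ≤ Real.cos (2 * Real.pi * δ) := by
  obtain ⟨hu1, hu2⟩ := hu
  have hπ := Real.pi_pos
  by_cases h : u ≤ 1/2
  · exact Real.cos_le_cos_of_nonneg_of_le_pi (by positivity) (by nlinarith) (by nlinarith)
  · push_neg at h
    have : Real.cos (2 * Real.pi * u) = Real.cos (2 * Real.pi * (1 - u)) := by
      rw [show 2 * Real.pi * (1 - u) = 2 * Real.pi - 2 * Real.pi * u by ring,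
        Real.cos_two_pi_sub]
    rw [this]
    exact Real.cos_le_cos_of_nonneg_of_le_pi (by positivity) (by nlinarith) (by nlinarith)

lemma FF_aa_le {N : ℕ} {c δ x : ℝ} (hδ : 0 < δ) (hδ4 : δ ≤ 1/4)
    (hx : Int.fract (x - c) ∈ Icc δ (1 - δ)) :
    FF (aa N c) x ≤ (2 / Real.sqrt (2 - 2 * Real.cos (2 * Real.pi * δ))) ^ 2 := by
  set m := Real.sqrt (2 - 2 * Real.cos (2 * Real.pi * δ)) with hm
  have hπ := Real.pi_pos
  have hcos1 : Real.cos (2 * Real.pi * δ) < 1 := by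
    have h0 : (0:ℝ) ∈ Icc 0 Real.pi := ⟨le_rfl, Real.pi_pos.le⟩
    have h1 : (2 * Real.pi * δ) ∈ Icc 0 Real.pi := ⟨by positivity, by nlinarith⟩
    have := Real.strictAntiOn_cos h0 h1 (by positivity)
    rwa [Real.cos_zero] at this
  have hmpos : 0 < m := Real.sqrt_pos.2 (by linarith)
  -- the bound on ‖z - 1‖
  set θ := 2 * Real.pi * (x - c) with hθ
  set z := Complex.exp ((θ:ℝ) * Complex.I) with hz
  have hznorm : ‖z‖ = 1 := by
    rw [hz, Complex.norm_exp_ofReal_mul_I]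
  have hcoseq : Real.cos θ = Real.cos (2 * Real.pi * Int.fract (x - c)) := by
    have : θ = 2 * Real.pi * Int.fract (x - c) + (⌊x - c⌋ : ℤ) * (2 * Real.pi) := by
      rw [hθ]
      have : x - c = Int.fract (x - c) + (⌊x - c⌋ : ℤ) := by unfold Int.fract; ring
      nlinarith [this]
    rw [this, Real.cos_add_int_mul_two_pi]
  have hzm : m ≤ ‖z - 1‖ := by
    have hsq : ‖z - 1‖ ^ 2 = 2 - 2 * Real.cos θ := norm_exp_sub_one_sq θ
    have hle : Real.cos θ ≤ Real.cos (2 * Real.pi * δ) := by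
      rw [hcoseq]; exact cos_le_of_fract hδ hδ4 hx
    have hm2 : m ^ 2 = 2 - 2 * Real.cos (2 * Real.pi * δ) := by
      rw [hm, sq, Real.mul_self_sqrt (by linarith)]
    nlinarith [norm_nonneg (z - 1), hmpos]
  have hb := geom_norm_le hznorm hmpos hzm N
  unfold FF
  rw [gg_aa]
  have h2m : 0 ≤ 2 / m := by positivity
  calc ‖∑ j ∈ Finset.range N, (Complex.exp (((2 * Real.pi * (x - c) : ℝ)) * Complex.I)) ^ j‖ ^ 2
      ≤ (2 / m) ^ 2 := by
        apply pow_le_pow_left₀ (norm_nonneg _)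
        exact hb
    _ = (2 / m) ^ 2 := rfl


lemma necessity {α L r : ℝ} (hα : 0 < α) (hαL : α < L) (hr : 0 < r)
    (hyp : ∃ A B : ℝ, 0 < A ∧ A ≤ B ∧
      ∀ a : ℤ →₀ ℂ,
        A * ∑ n ∈ a.support, ‖a n‖ ^ 2
            ≤ ∫ x in Ico 0 α ∪ Ico (α + r) (L + r), FF a x ∧
        ∫ x in Ico 0 α ∪ Ico (α + r) (L + r), FF a x
            ≤ B * ∑ n ∈ a.support, ‖a n‖ ^ 2) :
    ((1 ≤ α ∨ 1 ≤ L - α) ∨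
      (Int.fract r = 0 ∧ 1 ≤ L) ∨
      (1 ≤ L ∧ L < 2 ∧ 2 ≤ L + Int.fract r)) := by
  by_contra hR
  have hα1 : α < 1 := by
    by_contra h; push_neg at h; exact hR (Or.inl (Or.inl h))
  have hLα : L - α < 1 := by
    by_contra h; push_neg at h; exact hR (Or.inl (Or.inr h))
  have h3 : ¬(Int.fract r = 0 ∧ 1 ≤ L) := fun h => hR (Or.inr (Or.inl h))
  have h4 : ¬(1 ≤ L ∧ L < 2 ∧ 2 ≤ L + Int.fract r) := fun h => hR (Or.inr (Or.inr h))
  obtain ⟨c, δ, hδ, hδ4, hgap⟩ := exists_gap hα hαL hr hα1 hLα h3 h4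
  obtain ⟨A, B, hA, hAB, hbnd⟩ := hyp
  set C := (2 / Real.sqrt (2 - 2 * Real.cos (2 * Real.pi * δ))) ^ 2 with hC
  have hC0 : 0 ≤ C := sq_nonneg _
  set J := Ico (0:ℝ) α ∪ Ico (α + r) (L + r) with hJ
  have hsub : J ⊆ Ico 0 (L + r) := by
    rintro x (⟨hx1, hx2⟩ | ⟨hx1, hx2⟩) <;> constructor <;> linarith
  have hvle : volume J ≤ ENNReal.ofReal (L + r) := by
    calc volume J ≤ volume (Ico 0 (L + r)) := measure_mono hsub
      _ = ENNReal.ofReal (L + r - 0) := Real.volume_Ico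
      _ = ENNReal.ofReal (L + r) := by norm_num
  have hvlt : volume J < ⊤ := lt_of_le_of_lt hvle ENNReal.ofReal_lt_top
  have htoReal : (volume J).toReal ≤ L + r := by
    have := ENNReal.toReal_mono ENNReal.ofReal_ne_top hvle
    rwa [ENNReal.toReal_ofReal (by linarith)] at this
  have hint : ∀ N : ℕ, ∫ x in J, FF (aa N c) x ≤ C * (L + r) := by
    intro N
    have hb : ‖∫ x in J, FF (aa N c) x‖ ≤ C * (volume J).toReal := by
      refine norm_setIntegral_le_of_norm_le_const hvlt (fun x hx => ?_)
      · rw [Real.norm_eq_abs, abs_of_nonneg (FF_nonneg _ _)]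
        exact FF_aa_le hδ hδ4 (hgap x hx)
    calc ∫ x in J, FF (aa N c) x ≤ ‖∫ x in J, FF (aa N c) x‖ := le_abs_self _
      _ ≤ C * (volume J).toReal := hb
      _ ≤ C * (L + r) := mul_le_mul_of_nonneg_left htoReal hC0
  obtain ⟨N, hN⟩ := exists_nat_gt ((C * (L + r)) / A)
  have hAN : C * (L + r) < A * N := by
    rw [div_lt_iff₀ hA] at hN; linarith
  have hlow : A * (N : ℝ) ≤ ∫ x in J, FF (aa N c) x := by
    have h := (hbnd (aa N c)).1
    rwa [sum_sq_aa] at h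
  linarith [hint N]

end Stmt10Aux

theorem stmt10 (α L r : ℝ) (hα : 0 < α) (hαL : α < L) (hr : 0 < r) :
    (∃ A B : ℝ, 0 < A ∧ A ≤ B ∧
      ∀ a : ℤ →₀ ℂ,
        A * ∑ n ∈ a.support, ‖a n‖ ^ 2
            ≤ ∫ x in Ico 0 α ∪ Ico (α + r) (L + r),
                ‖∑ n ∈ a.support, a n * fExp1 n x‖ ^ 2 ∧
        ∫ x in Ico 0 α ∪ Ico (α + r) (L + r),
                ‖∑ n ∈ a.support, a n * fExp1 n x‖ ^ 2
            ≤ B * ∑ n ∈ a.support, ‖a n‖ ^ 2) ↔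
      ((1 ≤ α ∨ 1 ≤ L - α) ∨
        (Int.fract r = 0 ∧ 1 ≤ L) ∨
        (1 ≤ L ∧ L < 2 ∧ 2 ≤ L + Int.fract r)) := by
  open Stmt10Aux in
  constructor
  · intro hyp
    exact Stmt10Aux.necessity hα hαL hr hyp
  · intro hR
    refine ⟨1, max 1 ((⌈L + r⌉₊ : ℝ)), one_pos, le_max_left _ _, fun a => ?_⟩
    have hSnn : 0 ≤ ∑ n ∈ a.support, ‖a n‖ ^ 2 :=
      Finset.sum_nonneg fun n _ => sq_nonneg _
    constructor
    · rw [one_mul]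
      exact Stmt10Aux.lower_bound a hα hαL hr hR
    · calc (∫ x in Ico 0 α ∪ Ico (α + r) (L + r), Stmt10Aux.FF a x)
          ≤ (⌈L + r⌉₊ : ℝ) * ∑ n ∈ a.support, ‖a n‖ ^ 2 :=
            Stmt10Aux.upper_bound a hα hαL hr
        _ ≤ max 1 ((⌈L + r⌉₊ : ℝ)) * ∑ n ∈ a.support, ‖a n‖ ^ 2 :=
            mul_le_mul_of_nonneg_right (le_max_right _ _) hSnn
end
end

section
/- Let J = [0,α) ∪ [α+r, L+r) with 0 < α < 1, L - α < 1, and 0 < r < 1. Then the integer translates of J cover ℝ (up to measure zero) if and only if L + r ≥ 2. -/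
open MeasureTheory Real Set
open scoped ENNReal

noncomputable section

theorem stmt11 (α L r : ℝ) (hα : 0 < α) (hαL : α < L)
    (hα1 : α < 1) (hLα : L - α < 1) (hr : 0 < r) (hr1 : r < 1) :
    volume ((⋃ n : ℤ,
        (fun x => x + (n : ℝ)) '' (Ico 0 α ∪ Ico (α + r) (L + r)))ᶜ) = 0 ↔
      2 ≤ L + r := by
  constructor
  · intro h
    by_contra hlt
    push_neg at hlt
    set m := max α (L + r - 1) with hm
    set b := min (α + r) 1 with hb
    have hmb : m < b := by
      apply max_lt <;> apply lt_min <;> linarith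
    have hsub : Ioo m b ⊆ (⋃ n : ℤ,
        (fun x => x + (n : ℝ)) '' (Ico 0 α ∪ Ico (α + r) (L + r)))ᶜ := by
      intro x hx
      simp only [mem_compl_iff, mem_iUnion, mem_image, not_exists]
      rintro n y ⟨hy, rfl⟩
      have hxm : m < y + (n : ℝ) := hx.1
      have hxb : y + (n : ℝ) < b := hx.2
      have hmα : α ≤ m := le_max_left _ _
      have hmL : L + r - 1 ≤ m := le_max_right _ _
      have hbα : b ≤ α + r := min_le_left _ _
      have hb1 : b ≤ 1 := min_le_right _ _
      rcases hy with ⟨hy0, hyα⟩ | ⟨hy1, hy2⟩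
      · -- y ∈ [0, α)
        have hn0 : 0 < n := by
          have : (0 : ℝ) < n := by linarith
          exact_mod_cast this
        have hn1 : (1 : ℝ) ≤ n := by exact_mod_cast hn0
        linarith
      · -- y ∈ [α+r, L+r)
        rcases le_or_gt 0 n with hn | hn
        · have : (0 : ℝ) ≤ n := by exact_mod_cast hn
          linarith
        · have hn1 : n ≤ -1 := by omega
          have : (n : ℝ) ≤ -1 := by exact_mod_cast hn1
          linarith
    have hle := measure_mono (μ := volume) hsub
    rw [h] at hle
    have h0 : volume (Ioo m b) = 0 := le_antisymm hle zero_le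
    rw [Real.volume_Ioo, ENNReal.ofReal_eq_zero] at h0
    linarith
  · intro h2
    have huniv : (⋃ n : ℤ,
        (fun x => x + (n : ℝ)) '' (Ico 0 α ∪ Ico (α + r) (L + r))) = univ := by
      apply eq_univ_of_forall
      intro x
      simp only [mem_iUnion, mem_image]
      rcases lt_or_ge (x - ⌊x⌋) α with hc | hc
      · exact ⟨⌊x⌋, x - ⌊x⌋, Or.inl ⟨by linarith [Int.floor_le x], hc⟩, by ring⟩
      · refine ⟨⌊x⌋ - 1, x - (⌊x⌋ - 1 : ℤ), Or.inr ⟨?_, ?_⟩, by ring⟩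
        · push_cast
          linarith
        · push_cast
          have := Int.lt_floor_add_one x
          linarith
    rw [huniv, compl_univ, measure_empty]
end
end
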